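/- Let X and Y be Hilbert spaces, C ⊆ X a nonempty closed convex set, ψ† ∈ C, and T, T_h : X → Y bounded linear operators with ‖T − T_h‖ ≤ η_h. Assume the variational source condition holds: there exist β > 0 and a strictly increasing concave function φ : [0,∞) → [0,∞) with φ(0) = 0 such that β‖ψ − ψ†‖² ≤ ‖ψ‖² − ‖ψ†‖² + φ(‖T(ψ − ψ†)‖²) for all ψ ∈ C. Let S^δ ∈ Y satisfy ‖S^δ − Tψ†‖ ≤ δ, let α > η_h², and let ψ_reg ∈ C be a minimizer over C of ψ ↦ ‖T_h ψ − S^δ‖² + α‖ψ‖². Then β‖ψ_reg − ψ†‖² ≤ (6 η_h² ‖ψ†‖² + 4 δ²)/(α − η_h²) + (−φ)*(−1/(4(α − η_h²))), where (−φ)*(s) := sup_{t ≥ 0} (s t + φ(t)) denotes the Fenchel conjugate of −φ. -/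

import Mathlib

open Filter Topology

/-- Convergence estimate for constrained Tikhonov regularization with approximate
operator under a variational source condition (Theorem 3.1 variant). -/
theorem stmt_0
    {X Y : Type*} [NormedAddCommGroup X] [InnerProductSpace ℝ X] [CompleteSpace X]
    [NormedAddCommGroup Y] [InnerProductSpace ℝ Y] [CompleteSpace Y]
    (C : Set X) (hC_ne : C.Nonempty) (hC_closed : IsClosed C) (hC_conv : Convex ℝ C)
    (ψdag : X) (hψdag : ψdag ∈ C)
    (T Th : X →L[ℝ] Y) (ηh : ℝ) (hTTh : ‖T - Th‖ ≤ ηh)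
    (β : ℝ) (hβ : 0 < β)
    (φ : ℝ → ℝ) (hφ_mono : StrictMonoOn φ (Set.Ici 0))
    (hφ_conc : ConcaveOn ℝ (Set.Ici 0) φ) (hφ0 : φ 0 = 0)
    (hφ_nonneg : ∀ t ≥ 0, 0 ≤ φ t)
    (hvsc : ∀ ψ ∈ C, β * ‖ψ - ψdag‖ ^ 2 ≤ ‖ψ‖ ^ 2 - ‖ψdag‖ ^ 2 + φ (‖T (ψ - ψdag)‖ ^ 2))
    (δ : ℝ) (Sδ : Y) (hδ : ‖Sδ - T ψdag‖ ≤ δ)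
    (α : ℝ) (hα : ηh ^ 2 < α)
    (ψreg : X) (hψreg : ψreg ∈ C)
    (hmin : ∀ ψ ∈ C,
      ‖Th ψreg - Sδ‖ ^ 2 + α * ‖ψreg‖ ^ 2 ≤ ‖Th ψ - Sδ‖ ^ 2 + α * ‖ψ‖ ^ 2) :
    (↑(β * ‖ψreg - ψdag‖ ^ 2) : EReal) ≤
      (((6 * ηh ^ 2 * ‖ψdag‖ ^ 2 + 4 * δ ^ 2) / (α - ηh ^ 2) : ℝ) : EReal) +
        ⨆ t : {t : ℝ // 0 ≤ t},
          (((-(1 / (4 * (α - ηh ^ 2))) * (t : ℝ) + φ t : ℝ)) : EReal) := by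
  have hηh0 : 0 ≤ ηh := le_trans (norm_nonneg _) hTTh
  have hδ0 : 0 ≤ δ := le_trans (norm_nonneg _) hδ
  have hγ : 0 < α - ηh ^ 2 := by linarith
  set t0 : ℝ := ‖T (ψreg - ψdag)‖ ^ 2 with ht0def
  have ht0 : 0 ≤ t0 := sq_nonneg _
  have hvsc' := hvsc ψreg hψreg
  have hmin' := hmin ψdag hψdag
  -- bound on the defect at ψdag
  have h1 : ‖Th ψdag - Sδ‖ ≤ ηh * ‖ψdag‖ + δ := by
    have e1 : Th ψdag - Sδ = (Th - T) ψdag + (T ψdag - Sδ) := by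
      simp [ContinuousLinearMap.sub_apply]
    calc ‖Th ψdag - Sδ‖ ≤ ‖(Th - T) ψdag‖ + ‖T ψdag - Sδ‖ := by
          rw [e1]; exact norm_add_le _ _
      _ ≤ ηh * ‖ψdag‖ + δ := by
          gcongr
          · calc ‖(Th - T) ψdag‖ ≤ ‖Th - T‖ * ‖ψdag‖ := (Th - T).le_opNorm _
              _ ≤ ηh * ‖ψdag‖ := by
                  apply mul_le_mul_of_nonneg_right _ (norm_nonneg _)
                  rw [norm_sub_rev]; exact hTTh
          · rw [norm_sub_rev]; exact hδ
  have hDdag : ‖Th ψdag - Sδ‖ ^ 2 ≤ 2 * ηh ^ 2 * ‖ψdag‖ ^ 2 + 2 * δ ^ 2 := by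
    nlinarith [norm_nonneg (Th ψdag - Sδ), sq_nonneg (ηh * ‖ψdag‖ - δ)]
  -- bound on ‖T e‖
  have h2 : ‖T (ψreg - ψdag)‖ ≤ ηh * ‖ψreg‖ + ‖Th ψreg - Sδ‖ + δ := by
    have e2 : T (ψreg - ψdag) = (T - Th) ψreg + (Th ψreg - Sδ) + (Sδ - T ψdag) := by
      simp [ContinuousLinearMap.sub_apply, map_sub]
    calc ‖T (ψreg - ψdag)‖
        ≤ ‖(T - Th) ψreg‖ + ‖Th ψreg - Sδ‖ + ‖Sδ - T ψdag‖ := by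
          rw [e2]; exact norm_add₃_le
      _ ≤ ηh * ‖ψreg‖ + ‖Th ψreg - Sδ‖ + δ := by
          gcongr
          calc ‖(T - Th) ψreg‖ ≤ ‖T - Th‖ * ‖ψreg‖ := (T - Th).le_opNorm _
            _ ≤ ηh * ‖ψreg‖ := mul_le_mul_of_nonneg_right hTTh (norm_nonneg _)
  have ht0b : t0 ≤ 4 * ‖Th ψreg - Sδ‖ ^ 2 + 4 * δ ^ 2 + 2 * ηh ^ 2 * ‖ψreg‖ ^ 2 := by
    have hn : 0 ≤ ‖T (ψreg - ψdag)‖ := norm_nonneg _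
    nlinarith [sq_nonneg (ηh * ‖ψreg‖ - ‖Th ψreg - Sδ‖ - δ), sq_nonneg (‖Th ψreg - Sδ‖ - δ)]
  -- key scaled inequality
  have hvsc'' : β * ‖ψreg - ψdag‖ ^ 2 - φ t0 ≤ ‖ψreg‖ ^ 2 - ‖ψdag‖ ^ 2 := by linarith
  have main : (α - ηh ^ 2) * (β * ‖ψreg - ψdag‖ ^ 2 - φ t0) + t0 / 4
      ≤ 6 * ηh ^ 2 * ‖ψdag‖ ^ 2 + 4 * δ ^ 2 := by
    nlinarith [mul_le_mul_of_nonneg_left hvsc'' hγ.le, hmin', hDdag, ht0b,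
      mul_nonneg (sq_nonneg ηh) (sq_nonneg ‖ψdag‖),
      mul_nonneg (sq_nonneg ηh) (sq_nonneg ‖ψreg‖), sq_nonneg δ]
  have key : β * ‖ψreg - ψdag‖ ^ 2 ≤
      (6 * ηh ^ 2 * ‖ψdag‖ ^ 2 + 4 * δ ^ 2) / (α - ηh ^ 2)
        + (-(1 / (4 * (α - ηh ^ 2))) * t0 + φ t0) := by
    rw [← sub_le_iff_le_add, le_div_iff₀ hγ]
    have hs : 1 / (4 * (α - ηh ^ 2)) * t0 * (α - ηh ^ 2) = t0 / 4 := by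
      field_simp
    linarith [main, hs]
  refine le_trans ?_ (add_le_add_right (le_iSup (fun t : {t : ℝ // 0 ≤ t} =>
      (((-(1 / (4 * (α - ηh ^ 2))) * (t : ℝ) + φ t : ℝ)) : EReal)) ⟨t0, ht0⟩) _)
  rw [← EReal.coe_add]
  exact_mod_cast key
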